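/- arXiv:2103.07443 — 2 statements merged into one kernel-verified Lean document; each statement's English description precedes it below -/
import Mathlib

section
/- If a bipartite density matrix ρ on n+m qubits commutes with the total number operator N = N_A + N_B, then its partial transpose is block diagonal with respect to the eigenspaces of N_A − N_B: ρ^Γ = Σ_q P_q ρ^Γ P_q, where P_q is the orthogonal projector onto the eigenspace of N_A − N_B with eigenvalue q. -/
open scoped ComplexOrder
/-- The partial transpose with respect to the second (B) subsystem. -/
def partialTranspose {α β : Type*} (M : Matrix (α × β) (α × β) ℂ) :
    Matrix (α × β) (α × β) ℂ :=
  Matrix.of fun p q => M (p.1, q.2) (q.1, p.2)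

/-- Number of excitations (Hamming weight) of a computational basis state. -/
def wt {n : ℕ} (x : Fin n → Bool) : ℕ := (Finset.univ.filter (fun i => x i = true)).card

/-- The total number operator `N = N_A + N_B` on `n + m` qubits (diagonal in the
computational basis, with eigenvalue the total number of excitations). -/
def numberOp (n m : ℕ) : Matrix ((Fin n → Bool) × (Fin m → Bool)) ((Fin n → Bool) × (Fin m → Bool)) ℂ :=
  Matrix.diagonal (fun p => ((wt p.1 + wt p.2 : ℕ) : ℂ))

/-- The orthogonal projector `P_q = Σ_{a−b=q} Π_a(A) ⊗ Π_b(B)` onto the eigenspace of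
`N_A − N_B` with eigenvalue `q`. -/
def Pq (n m : ℕ) (q : ℤ) :
    Matrix ((Fin n → Bool) × (Fin m → Bool)) ((Fin n → Bool) × (Fin m → Bool)) ℂ :=
  Matrix.diagonal (fun p => if (wt p.1 : ℤ) - (wt p.2 : ℤ) = q then 1 else 0)

/-- If a bipartite density matrix `ρ` on `n + m` qubits commutes with the total number
operator, then its partial transpose is block diagonal with respect to the eigenspaces of
`N_A − N_B`: `ρ^Γ = Σ_q P_q ρ^Γ P_q`. -/
theorem stmt_9 (n m : ℕ)
    (ρ : Matrix ((Fin n → Bool) × (Fin m → Bool)) ((Fin n → Bool) × (Fin m → Bool)) ℂ)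
    (hρ : ρ.PosSemidef) (htr : ρ.trace = 1)
    (hsym : ρ * numberOp n m = numberOp n m * ρ) :
    partialTranspose ρ =
      ∑ q ∈ Finset.Icc (-(m : ℤ)) (n : ℤ), Pq n m q * partialTranspose ρ * Pq n m q := by
  have key : ∀ x y : (Fin n → Bool) × (Fin m → Bool),
      wt x.1 + wt x.2 ≠ wt y.1 + wt y.2 → ρ x y = 0 := by
    intro x y hxy
    have h : (ρ * numberOp n m) x y = (numberOp n m * ρ) x y := by rw [hsym]
    rw [numberOp, Matrix.mul_diagonal, Matrix.diagonal_mul] at h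
    by_contra h0
    have hc : ((wt y.1 + wt y.2 : ℕ) : ℂ) = ((wt x.1 + wt x.2 : ℕ) : ℂ) :=
      mul_left_cancel₀ h0 (h.trans (mul_comm _ _))
    exact hxy (by exact_mod_cast hc.symm)
  ext p r
  rw [Matrix.sum_apply]
  have hwp1 : wt p.1 ≤ n := le_trans (Finset.card_filter_le _ _) (by simp)
  have hwp2 : wt p.2 ≤ m := le_trans (Finset.card_filter_le _ _) (by simp)
  by_cases hd : (wt p.1 : ℤ) - wt p.2 = (wt r.1 : ℤ) - wt r.2
  · rw [Finset.sum_eq_single ((wt p.1 : ℤ) - wt p.2)]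
    · simp [Pq, Matrix.mul_diagonal, Matrix.diagonal_mul, hd.symm]
    · intro q _ hne
      simp only [Pq, Matrix.mul_diagonal, Matrix.diagonal_mul]
      rw [if_neg (fun h => hne h.symm)]
      ring
    · intro hnot
      exact absurd (Finset.mem_Icc.mpr ⟨by omega, by omega⟩) hnot
  · have hL : partialTranspose ρ p r = 0 := by
      apply key
      simp only []
      omega
    rw [hL]
    symm
    apply Finset.sum_eq_zero
    intro q _
    simp [Pq, Matrix.mul_diagonal, Matrix.diagonal_mul, hL]
end

section
/- Hilbert–Schmidt norm of the SR-D₂ two-copy observable: let P = Σ_{a−b=q} Π_a ⊗ Π_b be the symmetry-sector projector on H_A ⊗ H_B and Q = P ⊗ P − (1/2) W_A (P ⊗ I) W_A − (1/2) W_B (P ⊗ I) W_B, where W_A (resp. W_B) swaps the two copies of A (resp. B). Then tr(Q²) = (3/2) tr(P)² + (1/2)·2^{|AB|}·tr(P) − 2 Σ_{a−b=q} tr(Π_a)² tr(Π_b)², and consequently tr(Q²) ≤ (1/2) tr(P)(3 tr(P) + 2^{|AB|} − 4). -/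
open scoped ComplexOrder Kronecker

/-- Projector onto `n`-qubit computational basis states with exactly `a` excitations. -/
def PiProj (n : ℕ) (a : ℕ) : Matrix (Fin n → Bool) (Fin n → Bool) ℂ :=
  Matrix.diagonal (fun x => if wt x = a then 1 else 0)

/-- The symmetry-sector projector `P = Σ_{a−b=q} Π_a ⊗ Π_b` on `H_A ⊗ H_B`. -/
noncomputable def Psec (n m : ℕ) (q : ℤ) :
    Matrix ((Fin n → Bool) × (Fin m → Bool)) ((Fin n → Bool) × (Fin m → Bool)) ℂ :=
  ∑ a ∈ Finset.range (n + 1), ∑ b ∈ Finset.range (m + 1),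
    if (a : ℤ) - (b : ℤ) = q then PiProj n a ⊗ₖ PiProj m b else 0

/-- The swap of the two copies of subsystem `A` on `(H_A ⊗ H_B)^{⊗2}`. -/
def swapA (n m : ℕ) :
    Matrix ((((Fin n → Bool) × (Fin m → Bool))) × (((Fin n → Bool) × (Fin m → Bool))))
      ((((Fin n → Bool) × (Fin m → Bool))) × (((Fin n → Bool) × (Fin m → Bool)))) ℂ :=
  Matrix.of fun p r => if r = ((p.2.1, p.1.2), (p.1.1, p.2.2)) then 1 else 0

/-- The swap of the two copies of subsystem `B` on `(H_A ⊗ H_B)^{⊗2}`. -/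
def swapB (n m : ℕ) :
    Matrix ((((Fin n → Bool) × (Fin m → Bool))) × (((Fin n → Bool) × (Fin m → Bool))))
      ((((Fin n → Bool) × (Fin m → Bool))) × (((Fin n → Bool) × (Fin m → Bool)))) ℂ :=
  Matrix.of fun p r => if r = ((p.1.1, p.2.2), (p.2.1, p.1.2)) then 1 else 0

/- ---------- auxiliary material ---------- -/

def dd (n m : ℕ) (q : ℤ) (x : Fin n → Bool) (y : Fin m → Bool) : ℂ :=
  if (wt x : ℤ) - (wt y : ℤ) = q then 1 else 0

lemma wt_le {n : ℕ} (x : Fin n → Bool) : wt x ≤ n := by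
  have := Finset.card_filter_le (Finset.univ : Finset (Fin n)) (fun i => x i = true)
  simpa [wt] using this

lemma swap_conj {ι : Type*} [Fintype ι] [DecidableEq ι] (σ : ι → ι) (hσ : ∀ x, σ (σ x) = x)
    (g : ι → ℂ) :
    (Matrix.of fun p r => if r = σ p then (1:ℂ) else 0) * Matrix.diagonal g
      * (Matrix.of fun p r => if r = σ p then (1:ℂ) else 0)
      = Matrix.diagonal (fun p => g (σ p)) := by
  ext p r
  simp only [Matrix.mul_apply, Matrix.of_apply, Matrix.diagonal_apply, ite_mul, one_mul, zero_mul,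
    mul_ite, mul_one, mul_zero]
  simp only [Finset.sum_ite_eq', Finset.mem_univ, if_true]
  have : ∀ x : ι, (if r = σ x then if x = σ p then g x else 0 else 0)
      = if x = σ p then if r = σ x then g x else 0 else 0 := by
    intro x; split_ifs <;> rfl
  simp only [this]
  simp only [Finset.sum_ite_eq', Finset.mem_univ, if_true, hσ]
  by_cases h : p = r <;> simp [h, eq_comm]

lemma Psec_eq (n m : ℕ) (q : ℤ) :
    Psec n m q = Matrix.diagonal
      (fun z : (Fin n → Bool) × (Fin m → Bool) => dd n m q z.1 z.2) := by
  unfold Psec PiProj dd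
  simp only [Matrix.diagonal_kronecker_diagonal]
  ext z w
  simp only [Matrix.sum_apply, Matrix.diagonal_apply, ite_apply, Matrix.zero_apply]
  by_cases h : z = w
  · subst h
    simp only [if_pos rfl]
    rw [Finset.sum_eq_single (wt z.1)]
    · rw [Finset.sum_eq_single (wt z.2)]
      · split_ifs <;> simp_all
      · intro b _ hb; split_ifs <;> simp_all <;> omega
      · intro hb; exact absurd (Finset.mem_range.2 (Nat.lt_succ_of_le (wt_le z.2))) hb
    · intro a _ ha
      rw [Finset.sum_eq_zero]; intro b _; split_ifs <;> simp_all <;> omega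
    · intro ha; exact absurd (Finset.mem_range.2 (Nat.lt_succ_of_le (wt_le z.1))) ha
  · simp only [if_neg h]
    rw [Finset.sum_eq_zero]; intro a _
    rw [Finset.sum_eq_zero]; intro b _; split_ifs <;> simp_all

lemma pull2 {α : Type*} [Fintype α] {s t : Finset ℕ} (f : α → ℕ → ℕ → ℂ) :
    ∑ x : α, ∑ a ∈ s, ∑ b ∈ t, f x a b = ∑ a ∈ s, ∑ b ∈ t, ∑ x : α, f x a b := by
  rw [Finset.sum_comm]
  exact Finset.sum_congr rfl fun a _ => Finset.sum_comm

lemma sq_expand (n m : ℕ) (q : ℤ) (x₁ x₂ : Fin n → Bool) (y₁ y₂ : Fin m → Bool) :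
    (dd n m q x₁ y₁ * dd n m q x₂ y₂ - (1/2:ℂ) * dd n m q x₂ y₁ - (1/2:ℂ) * dd n m q x₁ y₂)
      * (dd n m q x₁ y₁ * dd n m q x₂ y₂ - (1/2:ℂ) * dd n m q x₂ y₁ - (1/2:ℂ) * dd n m q x₁ y₂)
    = dd n m q x₁ y₁ * dd n m q x₂ y₂ + (1/4:ℂ) * dd n m q x₂ y₁ + (1/4:ℂ) * dd n m q x₁ y₂
      + (1/2:ℂ) * (dd n m q x₂ y₁ * dd n m q x₁ y₂)
      - 2 * (dd n m q x₁ y₁ * dd n m q x₂ y₂ * (dd n m q x₂ y₁ * dd n m q x₁ y₂)) := by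
  unfold dd; split_ifs <;> first | (exfalso; omega) | ring

lemma E1 (n m : ℕ) (q : ℤ) :
    ∑ p : (((Fin n → Bool) × (Fin m → Bool)) × ((Fin n → Bool) × (Fin m → Bool))),
      dd n m q p.1.1 p.1.2 * dd n m q p.2.1 p.2.2
    = (∑ z : (Fin n → Bool) × (Fin m → Bool), dd n m q z.1 z.2)
      * (∑ z : (Fin n → Bool) × (Fin m → Bool), dd n m q z.1 z.2) := by
  rw [Fintype.sum_prod_type]
  dsimp only
  rw [← Finset.sum_mul_sum]

lemma E2 (n m : ℕ) (q : ℤ) :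
    ∑ p : (((Fin n → Bool) × (Fin m → Bool)) × ((Fin n → Bool) × (Fin m → Bool))),
      dd n m q p.2.1 p.1.2
    = (2^(n+m) : ℂ) * ∑ z : (Fin n → Bool) × (Fin m → Bool), dd n m q z.1 z.2 := by
  rw [Fintype.sum_prod_type]
  simp only [Fintype.sum_prod_type]
  rw [Finset.sum_comm]
  simp [Finset.sum_const, Finset.card_univ, Finset.mul_sum, mul_comm, pow_add, mul_assoc, mul_left_comm]
  rw [Finset.sum_comm]

lemma E3 (n m : ℕ) (q : ℤ) :
    ∑ p : (((Fin n → Bool) × (Fin m → Bool)) × ((Fin n → Bool) × (Fin m → Bool))),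
      dd n m q p.1.1 p.2.2
    = (2^(n+m) : ℂ) * ∑ z : (Fin n → Bool) × (Fin m → Bool), dd n m q z.1 z.2 := by
  have hσ : Function.Involutive (fun p : (((Fin n → Bool) × (Fin m → Bool)) × ((Fin n → Bool) × (Fin m → Bool))) => (p.2, p.1)) := by
    rintro ⟨a,b⟩; rfl
  exact (Fintype.sum_bijective _ hσ.bijective
    (fun p => dd n m q p.1.1 p.2.2)
    (fun p => dd n m q p.2.1 p.1.2) (fun p => rfl)).trans (E2 n m q)

lemma E4 (n m : ℕ) (q : ℤ) :
    ∑ p : (((Fin n → Bool) × (Fin m → Bool)) × ((Fin n → Bool) × (Fin m → Bool))),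
      dd n m q p.2.1 p.1.2 * dd n m q p.1.1 p.2.2
    = (∑ z : (Fin n → Bool) × (Fin m → Bool), dd n m q z.1 z.2)
      * (∑ z : (Fin n → Bool) × (Fin m → Bool), dd n m q z.1 z.2) := by
  have hσ : Function.Involutive (fun p : (((Fin n → Bool) × (Fin m → Bool)) × ((Fin n → Bool) × (Fin m → Bool))) => ((p.2.1, p.1.2), (p.1.1, p.2.2))) := by
    rintro ⟨⟨a,b⟩,⟨c,d⟩⟩; rfl
  exact (Fintype.sum_bijective _ hσ.bijective
    (fun p => dd n m q p.2.1 p.1.2 * dd n m q p.1.1 p.2.2)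
    (fun p => dd n m q p.1.1 p.1.2 * dd n m q p.2.1 p.2.2) (fun p => rfl)).trans (E1 n m q)

lemma hpt (n m : ℕ) (q : ℤ) (x₁ x₂ : Fin n → Bool) (y₁ y₂ : Fin m → Bool) :
    dd n m q x₁ y₁ * dd n m q x₂ y₂ * (dd n m q x₂ y₁ * dd n m q x₁ y₂)
    = ∑ a ∈ Finset.range (n+1), ∑ b ∈ Finset.range (m+1),
        (if (a:ℤ) - (b:ℤ) = q then (1:ℂ) else 0) *
        (((if wt x₁ = a then (1:ℂ) else 0) * (if wt x₂ = a then (1:ℂ) else 0)) *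
         ((if wt y₁ = b then (1:ℂ) else 0) * (if wt y₂ = b then (1:ℂ) else 0))) := by
  rw [Finset.sum_eq_single (wt x₁)]
  · rw [Finset.sum_eq_single (wt y₁)]
    · unfold dd; split_ifs <;> first | (exfalso; omega) | ring
    · intro b _ hb; split_ifs <;> simp_all <;> omega
    · intro hb; exact absurd (Finset.mem_range.2 (Nat.lt_succ_of_le (wt_le y₁))) hb
  · intro a _ ha
    rw [Finset.sum_eq_zero]; intro b _; split_ifs <;> simp_all <;> omega
  · intro ha; exact absurd (Finset.mem_range.2 (Nat.lt_succ_of_le (wt_le x₁))) ha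

lemma fact4 {α β : Type*} [Fintype α] [Fintype β] (f g : α → ℂ) (u v : β → ℂ) :
    (∑ x : α, f x) * (∑ x : α, g x) * ((∑ y : β, u y) * (∑ y : β, v y))
    = ∑ x₁ : α, ∑ y₁ : β, ∑ x₂ : α, ∑ y₂ : β, (f x₁ * g x₂) * (u y₁ * v y₂) := by
  rw [Finset.sum_mul_sum, Finset.sum_mul_sum, Finset.sum_mul_sum]
  exact Finset.sum_congr rfl fun x₁ _ => Finset.sum_congr rfl fun y₁ _ => Finset.sum_mul_sum _ _ _ _

lemma E5 (n m : ℕ) (q : ℤ) :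
    ∑ p : (((Fin n → Bool) × (Fin m → Bool)) × ((Fin n → Bool) × (Fin m → Bool))),
      dd n m q p.1.1 p.1.2 * dd n m q p.2.1 p.2.2 * (dd n m q p.2.1 p.1.2 * dd n m q p.1.1 p.2.2)
    = ∑ a ∈ Finset.range (n+1), ∑ b ∈ Finset.range (m+1),
        if (a:ℤ) - (b:ℤ) = q then
          (∑ x : Fin n → Bool, if wt x = a then (1:ℂ) else 0)^2
            * (∑ y : Fin m → Bool, if wt y = b then (1:ℂ) else 0)^2 else 0 := by
  rw [Fintype.sum_prod_type]
  simp only [Fintype.sum_prod_type]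
  calc
    ∑ x₁ : Fin n → Bool, ∑ y₁ : Fin m → Bool, ∑ x₂ : Fin n → Bool, ∑ y₂ : Fin m → Bool,
        dd n m q x₁ y₁ * dd n m q x₂ y₂ * (dd n m q x₂ y₁ * dd n m q x₁ y₂)
      = ∑ x₁ : Fin n → Bool, ∑ y₁ : Fin m → Bool, ∑ x₂ : Fin n → Bool, ∑ y₂ : Fin m → Bool,
          ∑ a ∈ Finset.range (n+1), ∑ b ∈ Finset.range (m+1),
            (if (a:ℤ) - (b:ℤ) = q then (1:ℂ) else 0) *
            (((if wt x₁ = a then (1:ℂ) else 0) * (if wt x₂ = a then (1:ℂ) else 0)) *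
             ((if wt y₁ = b then (1:ℂ) else 0) * (if wt y₂ = b then (1:ℂ) else 0))) := by
        exact Finset.sum_congr rfl fun x₁ _ => Finset.sum_congr rfl fun y₁ _ =>
          Finset.sum_congr rfl fun x₂ _ => Finset.sum_congr rfl fun y₂ _ => hpt n m q x₁ x₂ y₁ y₂
    _ = ∑ a ∈ Finset.range (n+1), ∑ b ∈ Finset.range (m+1),
          ∑ x₁ : Fin n → Bool, ∑ y₁ : Fin m → Bool, ∑ x₂ : Fin n → Bool, ∑ y₂ : Fin m → Bool,
            (if (a:ℤ) - (b:ℤ) = q then (1:ℂ) else 0) *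
            (((if wt x₁ = a then (1:ℂ) else 0) * (if wt x₂ = a then (1:ℂ) else 0)) *
             ((if wt y₁ = b then (1:ℂ) else 0) * (if wt y₂ = b then (1:ℂ) else 0))) := by
        refine (Finset.sum_congr rfl fun x₁ _ => Finset.sum_congr rfl fun y₁ _ =>
          Finset.sum_congr rfl fun x₂ _ => pull2 _).trans ?_
        refine (Finset.sum_congr rfl fun x₁ _ => Finset.sum_congr rfl fun y₁ _ => pull2 _).trans ?_
        refine (Finset.sum_congr rfl fun x₁ _ => pull2 _).trans ?_
        exact pull2 _
    _ = ∑ a ∈ Finset.range (n+1), ∑ b ∈ Finset.range (m+1),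
          if (a:ℤ) - (b:ℤ) = q then
            (∑ x : Fin n → Bool, if wt x = a then (1:ℂ) else 0)^2
              * (∑ y : Fin m → Bool, if wt y = b then (1:ℂ) else 0)^2 else 0 := by
        refine Finset.sum_congr rfl fun a _ => Finset.sum_congr rfl fun b _ => ?_
        by_cases hc : (a:ℤ) - (b:ℤ) = q
        · simp only [if_pos hc, one_mul]
          rw [pow_two, pow_two, fact4]
        · simp [if_neg hc]

lemma PiProj_trace (n a : ℕ) :
    (PiProj n a).trace = ((Finset.univ.filter fun x : Fin n → Bool => wt x = a).card : ℂ) := by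
  rw [PiProj, Matrix.trace_diagonal]
  simp [Finset.sum_boole]

lemma PiProj_trace_sum (n a : ℕ) :
    (PiProj n a).trace = ∑ x : Fin n → Bool, if wt x = a then (1:ℂ) else 0 := by
  rw [PiProj, Matrix.trace_diagonal]

lemma Psec_trace_eq (n m : ℕ) (q : ℤ) :
    (Psec n m q).trace = ∑ a ∈ Finset.range (n + 1), ∑ b ∈ Finset.range (m + 1),
      if (a : ℤ) - (b : ℤ) = q then (PiProj n a).trace * (PiProj m b).trace else 0 := by
  rw [Psec, Matrix.trace_sum]
  refine Finset.sum_congr rfl fun a _ => ?_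
  rw [Matrix.trace_sum]
  refine Finset.sum_congr rfl fun b _ => ?_
  split_ifs <;> simp [Matrix.trace_kronecker]

/-- Hilbert–Schmidt norm of the SR-`D₂` two-copy observable
`Q = P ⊗ P − (1/2) W_A (P ⊗ I) W_A − (1/2) W_B (P ⊗ I) W_B`:
`tr(Q²) = (3/2) tr(P)² + (1/2)·2^{n+m}·tr(P) − 2 Σ_{a−b=q} tr(Π_a)² tr(Π_b)²`, and
consequently `tr(Q²) ≤ (1/2) tr(P)(3 tr(P) + 2^{n+m} − 4)`. -/
theorem stmt_18 (n m : ℕ) (q : ℤ)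
    (Q : Matrix ((((Fin n → Bool) × (Fin m → Bool))) × (((Fin n → Bool) × (Fin m → Bool))))
      ((((Fin n → Bool) × (Fin m → Bool))) × (((Fin n → Bool) × (Fin m → Bool)))) ℂ)
    (hQ : Q = Psec n m q ⊗ₖ Psec n m q
      - ((1 : ℂ) / 2) • (swapA n m * (Psec n m q ⊗ₖ (1 : Matrix _ _ ℂ)) * swapA n m)
      - ((1 : ℂ) / 2) • (swapB n m * (Psec n m q ⊗ₖ (1 : Matrix _ _ ℂ)) * swapB n m)) :
    (Q * Q).trace =
        (3 / 2 : ℂ) * (Psec n m q).trace ^ 2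
          + (1 / 2 : ℂ) * 2 ^ (n + m) * (Psec n m q).trace
          - 2 * ∑ a ∈ Finset.range (n + 1), ∑ b ∈ Finset.range (m + 1),
              (if (a : ℤ) - (b : ℤ) = q then (PiProj n a).trace ^ 2 * (PiProj m b).trace ^ 2 else 0) ∧
      (Q * Q).trace ≤
        (1 / 2 : ℂ) * (Psec n m q).trace * (3 * (Psec n m q).trace + 2 ^ (n + m) - 4) := by
  have hA : swapA n m * (Psec n m q ⊗ₖ (1 : Matrix ((Fin n → Bool) × (Fin m → Bool)) _ ℂ)) * swapA n m
      = Matrix.diagonal (fun p => dd n m q p.2.1 p.1.2) := by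
    rw [Psec_eq]
    have h1 : (1 : Matrix ((Fin n → Bool) × (Fin m → Bool)) ((Fin n → Bool) × (Fin m → Bool)) ℂ)
        = Matrix.diagonal (fun _ => 1) := by simp [Matrix.diagonal_one]
    rw [h1, Matrix.diagonal_kronecker_diagonal]
    have := swap_conj (ι := (((Fin n → Bool) × (Fin m → Bool)) × ((Fin n → Bool) × (Fin m → Bool))))
      (fun p => ((p.2.1, p.1.2), (p.1.1, p.2.2))) (by rintro ⟨⟨x₁,y₁⟩,⟨x₂,y₂⟩⟩; rfl)
      (fun z => dd n m q z.1.1 z.1.2 * 1)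
    rw [show swapA n m = (Matrix.of fun p r =>
      if r = ((p.2.1, p.1.2), (p.1.1, p.2.2)) then (1:ℂ) else 0) from rfl]
    rw [this]
    ext p r
    simp [Matrix.diagonal_apply]
  have hB : swapB n m * (Psec n m q ⊗ₖ (1 : Matrix ((Fin n → Bool) × (Fin m → Bool)) _ ℂ)) * swapB n m
      = Matrix.diagonal (fun p => dd n m q p.1.1 p.2.2) := by
    rw [Psec_eq]
    have h1 : (1 : Matrix ((Fin n → Bool) × (Fin m → Bool)) ((Fin n → Bool) × (Fin m → Bool)) ℂ)
        = Matrix.diagonal (fun _ => 1) := by simp [Matrix.diagonal_one]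
    rw [h1, Matrix.diagonal_kronecker_diagonal]
    have := swap_conj (ι := (((Fin n → Bool) × (Fin m → Bool)) × ((Fin n → Bool) × (Fin m → Bool))))
      (fun p => ((p.1.1, p.2.2), (p.2.1, p.1.2))) (by rintro ⟨⟨x₁,y₁⟩,⟨x₂,y₂⟩⟩; rfl)
      (fun z => dd n m q z.1.1 z.1.2 * 1)
    rw [show swapB n m = (Matrix.of fun p r =>
      if r = ((p.1.1, p.2.2), (p.2.1, p.1.2)) then (1:ℂ) else 0) from rfl]
    rw [this]
    ext p r
    simp [Matrix.diagonal_apply]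
  have hQd : Q = Matrix.diagonal (fun p : (((Fin n → Bool) × (Fin m → Bool)) × ((Fin n → Bool) × (Fin m → Bool))) =>
      dd n m q p.1.1 p.1.2 * dd n m q p.2.1 p.2.2
        - (1/2 : ℂ) * dd n m q p.2.1 p.1.2 - (1/2 : ℂ) * dd n m q p.1.1 p.2.2) := by
    rw [hQ, hA, hB, Psec_eq, Matrix.diagonal_kronecker_diagonal]
    ext p r
    by_cases h : p = r
    · subst h; simp [Matrix.diagonal_apply]
    · simp [Matrix.diagonal_apply, h]
  have hQQ : (Q * Q).trace =
      ∑ p : (((Fin n → Bool) × (Fin m → Bool)) × ((Fin n → Bool) × (Fin m → Bool))),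
        (dd n m q p.1.1 p.1.2 * dd n m q p.2.1 p.2.2
          - (1/2 : ℂ) * dd n m q p.2.1 p.1.2 - (1/2 : ℂ) * dd n m q p.1.1 p.2.2)
        * (dd n m q p.1.1 p.1.2 * dd n m q p.2.1 p.2.2
          - (1/2 : ℂ) * dd n m q p.2.1 p.1.2 - (1/2 : ℂ) * dd n m q p.1.1 p.2.2) := by
    rw [hQd, Matrix.diagonal_mul_diagonal, Matrix.trace_diagonal]
  have hTr : (Psec n m q).trace
      = ∑ z : (Fin n → Bool) × (Fin m → Bool), dd n m q z.1 z.2 := by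
    rw [Psec_eq, Matrix.trace_diagonal]
  have h1 : (Q * Q).trace =
      (3 / 2 : ℂ) * (Psec n m q).trace ^ 2
        + (1 / 2 : ℂ) * 2 ^ (n + m) * (Psec n m q).trace
        - 2 * ∑ a ∈ Finset.range (n + 1), ∑ b ∈ Finset.range (m + 1),
            (if (a : ℤ) - (b : ℤ) = q then (PiProj n a).trace ^ 2 * (PiProj m b).trace ^ 2 else 0) := by
    rw [hQQ]
    calc
      ∑ p : (((Fin n → Bool) × (Fin m → Bool)) × ((Fin n → Bool) × (Fin m → Bool))),
        (dd n m q p.1.1 p.1.2 * dd n m q p.2.1 p.2.2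
          - (1/2 : ℂ) * dd n m q p.2.1 p.1.2 - (1/2 : ℂ) * dd n m q p.1.1 p.2.2)
        * (dd n m q p.1.1 p.1.2 * dd n m q p.2.1 p.2.2
          - (1/2 : ℂ) * dd n m q p.2.1 p.1.2 - (1/2 : ℂ) * dd n m q p.1.1 p.2.2)
        = ∑ p : (((Fin n → Bool) × (Fin m → Bool)) × ((Fin n → Bool) × (Fin m → Bool))),
            (dd n m q p.1.1 p.1.2 * dd n m q p.2.1 p.2.2
              + (1/4:ℂ) * dd n m q p.2.1 p.1.2 + (1/4:ℂ) * dd n m q p.1.1 p.2.2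
              + (1/2:ℂ) * (dd n m q p.2.1 p.1.2 * dd n m q p.1.1 p.2.2)
              - 2 * (dd n m q p.1.1 p.1.2 * dd n m q p.2.1 p.2.2
                  * (dd n m q p.2.1 p.1.2 * dd n m q p.1.1 p.2.2))) :=
          Finset.sum_congr rfl fun p _ => sq_expand n m q p.1.1 p.2.1 p.1.2 p.2.2
      _ = (∑ p : (((Fin n → Bool) × (Fin m → Bool)) × ((Fin n → Bool) × (Fin m → Bool))),
            dd n m q p.1.1 p.1.2 * dd n m q p.2.1 p.2.2)
          + (1/4:ℂ) * (∑ p : (((Fin n → Bool) × (Fin m → Bool)) × ((Fin n → Bool) × (Fin m → Bool))),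
            dd n m q p.2.1 p.1.2)
          + (1/4:ℂ) * (∑ p : (((Fin n → Bool) × (Fin m → Bool)) × ((Fin n → Bool) × (Fin m → Bool))),
            dd n m q p.1.1 p.2.2)
          + (1/2:ℂ) * (∑ p : (((Fin n → Bool) × (Fin m → Bool)) × ((Fin n → Bool) × (Fin m → Bool))),
            dd n m q p.2.1 p.1.2 * dd n m q p.1.1 p.2.2)
          - 2 * (∑ p : (((Fin n → Bool) × (Fin m → Bool)) × ((Fin n → Bool) × (Fin m → Bool))),
            dd n m q p.1.1 p.1.2 * dd n m q p.2.1 p.2.2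
              * (dd n m q p.2.1 p.1.2 * dd n m q p.1.1 p.2.2)) := by
          simp only [Finset.sum_add_distrib, Finset.sum_sub_distrib, ← Finset.mul_sum]
      _ = (3 / 2 : ℂ) * (Psec n m q).trace ^ 2
          + (1 / 2 : ℂ) * 2 ^ (n + m) * (Psec n m q).trace
          - 2 * ∑ a ∈ Finset.range (n + 1), ∑ b ∈ Finset.range (m + 1),
              (if (a : ℤ) - (b : ℤ) = q then (PiProj n a).trace ^ 2 * (PiProj m b).trace ^ 2 else 0) := by
          rw [E1, E2, E3, E4, E5]
          simp only [hTr, PiProj_trace_sum]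
          ring
  refine ⟨h1, ?_⟩
  rw [h1]
  have key : (Psec n m q).trace ≤ ∑ a ∈ Finset.range (n + 1), ∑ b ∈ Finset.range (m + 1),
      (if (a : ℤ) - (b : ℤ) = q then (PiProj n a).trace ^ 2 * (PiProj m b).trace ^ 2 else 0) := by
    rw [Psec_trace_eq]
    refine Finset.sum_le_sum fun a _ => Finset.sum_le_sum fun b _ => ?_
    split_ifs with hc
    · rw [PiProj_trace, PiProj_trace]
      set k := (Finset.univ.filter fun x : Fin n → Bool => wt x = a).card with hk
      set l := (Finset.univ.filter fun y : Fin m → Bool => wt y = b).card with hl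
      have hnat : k * l ≤ k^2 * l^2 := by
        calc k * l ≤ (k*l)^2 := Nat.le_self_pow two_ne_zero _
          _ = k^2 * l^2 := by ring
      calc ((k:ℂ) * l) = ((k*l : ℕ) : ℂ) := by push_cast; ring
        _ ≤ ((k^2*l^2 : ℕ) : ℂ) := by exact_mod_cast Nat.cast_le.mpr hnat
        _ = (k:ℂ)^2 * (l:ℂ)^2 := by push_cast; ring
    · exact le_refl _
  have h2 : (2:ℂ) * (Psec n m q).trace ≤ 2 * ∑ a ∈ Finset.range (n + 1), ∑ b ∈ Finset.range (m + 1),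
      (if (a : ℤ) - (b : ℤ) = q then (PiProj n a).trace ^ 2 * (PiProj m b).trace ^ 2 else 0) :=
    mul_le_mul_of_nonneg_left key (by norm_num)
  calc (3 / 2 : ℂ) * (Psec n m q).trace ^ 2
          + (1 / 2 : ℂ) * 2 ^ (n + m) * (Psec n m q).trace
          - 2 * ∑ a ∈ Finset.range (n + 1), ∑ b ∈ Finset.range (m + 1),
              (if (a : ℤ) - (b : ℤ) = q then (PiProj n a).trace ^ 2 * (PiProj m b).trace ^ 2 else 0)
      ≤ (3 / 2 : ℂ) * (Psec n m q).trace ^ 2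
          + (1 / 2 : ℂ) * 2 ^ (n + m) * (Psec n m q).trace
          - 2 * (Psec n m q).trace := sub_le_sub_left h2 _
    _ = (1 / 2 : ℂ) * (Psec n m q).trace * (3 * (Psec n m q).trace + 2 ^ (n + m) - 4) := by ring
end
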